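/- For the SAIS system without awareness decay with 0 < βₐ < δ < β, the point (s*, a*) = (δ/(κ+β), κδ/(βₐ(κ+β))) is an equilibrium of the system, and it lies in the interior of R (i.e. s* + a* < 1 with s*, a* > 0) if and only if κ < κ* := βₐ(β-δ)/(δ-βₐ). At κ = κ* this equilibrium coincides with the boundary point (s₀*, 1-s₀*) where s₀* = (δ-βₐ)/(β-βₐ). -/

import Mathlib

/-- The endemic equilibrium (s*,a*) of the SAIS model without decay, the
die-out threshold κ* and the bifurcation from (s₀*, 1-s₀*). -/
theorem stmt_6
    (β βa κ δ : ℝ)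
    (hβa : 0 < βa) (hβaδ : βa < δ) (hδβ : δ < β) (hκ : 0 < κ) :
    let s' := δ / (κ + β)
    let a' := κ * δ / (βa * (κ + β))
    let κstar := βa * (β - δ) / (δ - βa)
    let s₀ := (δ - βa) / (β - βa)
    ((1 - s' - a') * (δ - (κ + β) * s') = 0 ∧
      (1 - s' - a') * (κ * s' - βa * a') = 0) ∧
    ((s' + a' < 1 ∧ 0 < s' ∧ 0 < a') ↔ κ < κstar) ∧
    (κ = κstar → s' = s₀ ∧ a' = 1 - s₀) := by
  intro s' a' κstar s₀
  have hκβ : (0:ℝ) < κ + β := by linarith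
  have hδ : (0:ℝ) < δ := by linarith
  have hδβa : (0:ℝ) < δ - βa := by linarith
  have hββa : (0:ℝ) < β - βa := by linarith
  refine ⟨⟨?_, ?_⟩, ?_, ?_⟩
  · show (1 - s' - a') * (δ - (κ + β) * s') = 0
    have : δ - (κ + β) * s' = 0 := by
      show δ - (κ + β) * (δ / (κ + β)) = 0
      field_simp
      ring
    rw [this, mul_zero]
  · show (1 - s' - a') * (κ * s' - βa * a') = 0
    have : κ * s' - βa * a' = 0 := by
      show κ * (δ / (κ + β)) - βa * (κ * δ / (βa * (κ + β))) = 0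
      field_simp
      ring
    rw [this, mul_zero]
  · constructor
    · rintro ⟨h1, -, -⟩
      show κ < βa * (β - δ) / (δ - βa)
      rw [lt_div_iff₀ hδβa]
      have h1' : δ / (κ + β) + κ * δ / (βa * (κ + β)) < 1 := h1
      rw [div_add_div _ _ (ne_of_gt hκβ) (by positivity), div_lt_one (by positivity)] at h1'
      nlinarith
    · intro h
      have h' : κ * (δ - βa) < βa * (β - δ) := by
        have := (lt_div_iff₀ hδβa).mp h
        linarith
      refine ⟨?_, by positivity, by positivity⟩
      show δ / (κ + β) + κ * δ / (βa * (κ + β)) < 1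
      rw [div_add_div _ _ (ne_of_gt hκβ) (by positivity), div_lt_one (by positivity)]
      nlinarith
  · intro h
    have hκv : κ = βa * (β - δ) / (δ - βa) := h
    have hsum : κ + β = δ * (β - βa) / (δ - βa) := by
      rw [hκv]; field_simp; ring
    constructor
    · show δ / (κ + β) = (δ - βa) / (β - βa)
      rw [hsum]
      field_simp
    · show κ * δ / (βa * (κ + β)) = 1 - (δ - βa) / (β - βa)
      rw [hsum, hκv]
      field_simp
      ring
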